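/- arXiv:1105.3538 — 2 statements merged into one kernel-verified Lean document; each statement's English description precedes it below -/
import Mathlib

section
/- (Holland's approximate schema theorem for one-point crossover.) Assume ℓ ≥ 2. Let x ∈ Λ, let c ∈ [0,1], and let y = C(x) where C is the crossover heuristic for one-point crossover with crossover rate c. Then for every u ∈ Ω and every k ∈ Ω_u, y_k^{(u)} ≥ x_k^{(u)} · (1 − c·L(u)/(ℓ−1)). -/
open Finset

noncomputable section

/-- `#u`: the number of one-bits of `u` (sum of binary digits). -/
def pc (u : ℕ) : ℕ := (Nat.digits 2 u).sum

/-- `ū`: the bitwise complement of `u` within `ℓ` bits. -/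
def cpl (ℓ u : ℕ) : ℕ := u ^^^ (2 ^ ℓ - 1)

/-- `Ω_u`: the set of `v < 2^ℓ` with `v ⊗ u = v`. -/
def omg (ℓ u : ℕ) : Finset ℕ := (Finset.range (2 ^ ℓ)).filter (fun v => v &&& u = v)

/-- `I(u)`: the set of indices `i < ℓ` where bit `i` of `u` is one. -/
def idx (ℓ u : ℕ) : Finset ℕ := (Finset.range ℓ).filter (fun i => u.testBit i)

/-- The schema average `x_k^{(u)} = Σ_{i ∈ Ω_{ū}} x_{i ⊕ k}`. -/
def schAvg (ℓ : ℕ) (x : ℕ → ℝ) (u k : ℕ) : ℝ := ∑ i ∈ omg ℓ (cpl ℓ u), x (i ^^^ k)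

/-- The Walsh transform `x̂ = W x`, with `W_{i,j} = n^{-1/2} (-1)^{i^T j}`. -/
def walsh (ℓ : ℕ) (x : ℕ → ℝ) (k : ℕ) : ℝ :=
  (Real.sqrt (2 ^ ℓ))⁻¹ * ∑ j ∈ Finset.range (2 ^ ℓ), (-1 : ℝ) ^ pc (k &&& j) * x j

/-- Proportional selection `F(x)_k = f_k x_k / Σ_j f_j x_j`. -/
def propSel (ℓ : ℕ) (f x : ℕ → ℝ) (k : ℕ) : ℝ :=
  f k * x k / ∑ j ∈ Finset.range (2 ^ ℓ), f j * x j

/-- The crossover heuristic for a crossover-mask distribution `χ`. -/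
def crossH (ℓ : ℕ) (χ : ℕ → ℝ) (x : ℕ → ℝ) (k : ℕ) : ℝ :=
  ∑ i ∈ Finset.range (2 ^ ℓ), ∑ j ∈ Finset.range (2 ^ ℓ), x i * x j *
    ∑ m ∈ Finset.range (2 ^ ℓ), ((χ m + χ (cpl ℓ m)) / 2) *
      (if (i &&& m) ^^^ (j &&& cpl ℓ m) = k then (1 : ℝ) else 0)

/-- The mutation heuristic for a mutation-mask distribution `μ`. -/
def mutH (ℓ : ℕ) (μ : ℕ → ℝ) (x : ℕ → ℝ) (k : ℕ) : ℝ :=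
  ∑ j ∈ Finset.range (2 ^ ℓ), μ (j ^^^ k) * x j

/-- Mask distribution of independent bitwise mutation with rates `p i`:
`μ_m = ∏_i p_i^{m_i} (1-p_i)^{1-m_i}` (with `0^0 = 1`). -/
def mutDist (ℓ : ℕ) (p : ℕ → ℝ) (m : ℕ) : ℝ :=
  ∏ i ∈ Finset.range ℓ, (if m.testBit i then p i else 1 - p i)

/-- Mask distribution of one-point crossover with crossover rate `c` (for `ℓ ≥ 2`). -/
def onePoint (ℓ : ℕ) (c : ℝ) (m : ℕ) : ℝ :=
  if m = 0 then 1 - c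
  else if ∃ i ∈ Finset.Ico 1 ℓ, m = 2 ^ i - 1 then c / ((ℓ : ℝ) - 1)
  else 0

/-- `hi(u)`: index of the highest one-bit of `u` (`hi 0 = 0`). -/
def hiBit (u : ℕ) : ℕ := Nat.log2 u

/-- `lo(u)`: index of the lowest one-bit of `u` (`lo 0 = ℓ - 1`). -/
def loBit (ℓ u : ℕ) : ℕ := if u = 0 then ℓ - 1 else padicValNat 2 u

/-- The defining length `L(u) = hi(u) - lo(u)`. -/
def defLen (ℓ u : ℕ) : ℕ := hiBit u - loBit ℓ u


/-! ### Auxiliary lemmas -/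

section Aux
open Finset

lemma testBit_high {ℓ m b : ℕ} (hm : m < 2 ^ ℓ) (hb : ℓ ≤ b) : m.testBit b = false :=
  Nat.testBit_lt_two_pow (lt_of_lt_of_le hm (Nat.pow_le_pow_right (by norm_num) hb))

lemma testBit_cpl (ℓ m b : ℕ) (hm : m < 2 ^ ℓ) :
    (cpl ℓ m).testBit b = ((!m.testBit b) && decide (b < ℓ)) := by
  rw [cpl, Nat.testBit_xor, Nat.testBit_two_pow_sub_one]
  by_cases hb : b < ℓ
  · simp [hb]
  · simp [hb, testBit_high hm (le_of_not_gt hb)]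

lemma cpl_cpl (ℓ m : ℕ) : cpl ℓ (cpl ℓ m) = m := by
  simp [cpl, Nat.xor_assoc]

lemma cpl_lt (ℓ m : ℕ) (hm : m < 2 ^ ℓ) : cpl ℓ m < 2 ^ ℓ := by
  have h1 : (2:ℕ) ^ ℓ - 1 < 2 ^ ℓ := by
    have : 0 < (2:ℕ) ^ ℓ := Nat.pow_pos (by norm_num)
    omega
  exact Nat.xor_lt_two_pow hm h1

lemma and_cpl_self (ℓ m : ℕ) (hm : m < 2 ^ ℓ) : m &&& cpl ℓ m = 0 := by
  apply Nat.eq_of_testBit_eq; intro b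
  rw [Nat.testBit_and, testBit_cpl ℓ m b hm]
  cases h : m.testBit b <;> simp [h]

lemma xor_cpl_self (ℓ m : ℕ) : m ^^^ cpl ℓ m = 2 ^ ℓ - 1 := by
  simp [cpl, ← Nat.xor_assoc]

lemma and_split (ℓ m k : ℕ) (hk : k < 2 ^ ℓ) :
    (k &&& m) ^^^ (k &&& cpl ℓ m) = k := by
  rw [← Nat.and_xor_distrib_left, xor_cpl_self, Nat.and_two_pow_sub_one_eq_mod,
    Nat.mod_eq_of_lt hk]

lemma and_cpl_of (ℓ i u : ℕ) (hi : i < 2 ^ ℓ) (hu : u < 2 ^ ℓ) (h : i &&& u = 0) :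
    i &&& cpl ℓ u = i := by
  apply Nat.eq_of_testBit_eq; intro b
  rw [Nat.testBit_and, testBit_cpl ℓ u b hu]
  cases hb : i.testBit b with
  | false => simp
  | true =>
    have hu : u.testBit b = false := by
      have := congrArg (fun n => n.testBit b) h
      simpa [Nat.testBit_and, hb] using this
    have hbl : b < ℓ := by
      by_contra hge
      have : i < 2 ^ b :=
        lt_of_lt_of_le hi (Nat.pow_le_pow_right (by norm_num) (le_of_not_gt hge))
      simp [Nat.testBit_lt_two_pow this] at hb
    simp [hu, hbl]

/-- `A v w = Σ_{i<2^ℓ} [i &&& v = w] x i`. -/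
def Asum (ℓ : ℕ) (x : ℕ → ℝ) (v w : ℕ) : ℝ :=
  ∑ i ∈ Finset.range (2 ^ ℓ), if i &&& v = w then x i else 0

lemma Asum_nonneg (ℓ : ℕ) (x : ℕ → ℝ)
    (hx0 : ∀ i ∈ Finset.range (2 ^ ℓ), 0 ≤ x i) (v w : ℕ) :
    0 ≤ Asum ℓ x v w := by
  refine Finset.sum_nonneg fun i hi => ?_
  split
  · exact hx0 i hi
  · exact le_rfl

lemma Asum_zero (ℓ : ℕ) (x : ℕ → ℝ)
    (hx1 : ∑ i ∈ Finset.range (2 ^ ℓ), x i = 1) :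
    Asum ℓ x 0 0 = 1 := by
  rw [← hx1]
  exact Finset.sum_congr rfl fun i _ => by simp

lemma schAvg_eq_Asum (ℓ : ℕ) (x : ℕ → ℝ) (u k : ℕ) (hu : u < 2 ^ ℓ)
    (hk : k < 2 ^ ℓ) (hku : k &&& u = k) :
    schAvg ℓ x u k = Asum ℓ x u k := by
  have hA : Asum ℓ x u k
      = ∑ j ∈ (Finset.range (2 ^ ℓ)).filter (fun j => j &&& u = k), x j := by
    rw [Asum, Finset.sum_filter]
  rw [hA, schAvg]
  refine Finset.sum_nbij' (fun i => i ^^^ k) (fun j => j ^^^ k) ?_ ?_ ?_ ?_ ?_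
  · intro a ha
    simp only [omg, Finset.mem_filter, Finset.mem_range] at ha ⊢
    obtain ⟨ha1, ha2⟩ := ha
    have hau : a &&& u = 0 := by
      conv_lhs => rw [← ha2]
      rw [Nat.and_assoc, Nat.and_comm (cpl ℓ u) u, and_cpl_self ℓ u hu, Nat.and_zero]
    refine ⟨Nat.xor_lt_two_pow ha1 hk, ?_⟩
    rw [Nat.and_xor_distrib_right, hau, hku, Nat.zero_xor]
  · intro j hj
    simp only [omg, Finset.mem_filter, Finset.mem_range] at hj ⊢
    obtain ⟨hj1, hj2⟩ := hj
    have hxu : (j ^^^ k) &&& u = 0 := by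
      rw [Nat.and_xor_distrib_right, hj2, hku, Nat.xor_self]
    exact ⟨Nat.xor_lt_two_pow hj1 hk, and_cpl_of ℓ _ u (Nat.xor_lt_two_pow hj1 hk) hu hxu⟩
  · intro a _; simp [Nat.xor_assoc]
  · intro a _; simp [Nat.xor_assoc]
  · intro a _; rfl

end Aux


lemma and_cpl_eq (ℓ a m : ℕ) (ha : a < 2 ^ ℓ) : a &&& cpl ℓ m = (a &&& m) ^^^ a := by
  rw [cpl, Nat.and_xor_distrib_left, Nat.and_two_pow_sub_one_eq_mod, Nat.mod_eq_of_lt ha]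

lemma child_lt (ℓ i j m : ℕ) (hi : i < 2 ^ ℓ) (hj : j < 2 ^ ℓ) :
    (i &&& m) ^^^ (j &&& cpl ℓ m) < 2 ^ ℓ :=
  Nat.xor_lt_two_pow (lt_of_le_of_lt Nat.and_le_left hi)
    (lt_of_le_of_lt Nat.and_le_left hj)

lemma indic_split (ℓ i j m u k : ℕ) (hm : m < 2 ^ ℓ) (hk : k < 2 ^ ℓ)
    (hku : k &&& u = k) :
    (((i &&& m) ^^^ (j &&& cpl ℓ m)) &&& u = k) ↔
      (i &&& (u &&& m) = k &&& m ∧ j &&& (u &&& cpl ℓ m) = k &&& cpl ℓ m) := by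
  have e1 : (((i &&& m) ^^^ (j &&& cpl ℓ m)) &&& u) &&& m = i &&& (u &&& m) := by
    apply Nat.eq_of_testBit_eq; intro b
    simp only [Nat.testBit_and, Nat.testBit_xor, testBit_cpl ℓ m b hm]
    cases m.testBit b <;> cases i.testBit b <;> cases j.testBit b <;>
      cases u.testBit b <;> by_cases hb : b < ℓ <;> simp [hb]
  have e2 : (((i &&& m) ^^^ (j &&& cpl ℓ m)) &&& u) &&& cpl ℓ m
      = j &&& (u &&& cpl ℓ m) := by
    apply Nat.eq_of_testBit_eq; intro b
    simp only [Nat.testBit_and, Nat.testBit_xor, testBit_cpl ℓ m b hm]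
    cases m.testBit b <;> cases i.testBit b <;> cases j.testBit b <;>
      cases u.testBit b <;> by_cases hb : b < ℓ <;> simp [hb]
  constructor
  · intro h
    refine ⟨?_, ?_⟩
    · rw [← e1, h]
    · rw [← e2, h]
  · rintro ⟨h1, h2⟩
    have hre : ((i &&& m) ^^^ (j &&& cpl ℓ m)) &&& u
        = (i &&& (u &&& m)) ^^^ (j &&& (u &&& cpl ℓ m)) := by
      rw [Nat.and_xor_distrib_right]
      congr 1
      · rw [Nat.and_assoc, Nat.and_comm m u]
      · rw [Nat.and_assoc, Nat.and_comm (cpl ℓ m) u]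
    rw [hre, h1, h2, and_split ℓ m k hk]

/-- `T(m) = A(u∧m, k∧m) · A(u∧m̄, k∧m̄)`. -/
def TProd (ℓ : ℕ) (x : ℕ → ℝ) (u k m : ℕ) : ℝ :=
  Asum ℓ x (u &&& m) (k &&& m) * Asum ℓ x (u &&& cpl ℓ m) (k &&& cpl ℓ m)

lemma schAvg_crossH (ℓ : ℕ) (χ x : ℕ → ℝ) (u k : ℕ) (hu : u < 2 ^ ℓ)
    (hk : k < 2 ^ ℓ) (hku : k &&& u = k) :
    schAvg ℓ (crossH ℓ χ x) u k =
      ∑ m ∈ Finset.range (2 ^ ℓ),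
        ((χ m + χ (cpl ℓ m)) / 2) * TProd ℓ x u k m := by
  have hcross : ∀ p, crossH ℓ χ x p
      = ∑ i ∈ Finset.range (2 ^ ℓ), ∑ j ∈ Finset.range (2 ^ ℓ),
          ∑ m ∈ Finset.range (2 ^ ℓ),
            x i * x j * (((χ m + χ (cpl ℓ m)) / 2) *
              (if (i &&& m) ^^^ (j &&& cpl ℓ m) = p then (1:ℝ) else 0)) := by
    intro p
    rw [crossH]
    exact Finset.sum_congr rfl fun i _ => Finset.sum_congr rfl fun j _ =>
      Finset.mul_sum _ _ _
  rw [schAvg_eq_Asum ℓ _ u k hu hk hku, Asum]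
  calc
    ∑ p ∈ Finset.range (2 ^ ℓ), (if p &&& u = k then crossH ℓ χ x p else 0)
      = ∑ p ∈ Finset.range (2 ^ ℓ), ∑ i ∈ Finset.range (2 ^ ℓ),
          ∑ j ∈ Finset.range (2 ^ ℓ), ∑ m ∈ Finset.range (2 ^ ℓ),
            (if p &&& u = k then
              x i * x j * (((χ m + χ (cpl ℓ m)) / 2) *
                (if (i &&& m) ^^^ (j &&& cpl ℓ m) = p then (1:ℝ) else 0)) else 0) := by
        refine Finset.sum_congr rfl fun p _ => ?_
        rw [hcross p]
        split
        · rfl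
        · simp
    _ = ∑ i ∈ Finset.range (2 ^ ℓ), ∑ j ∈ Finset.range (2 ^ ℓ),
          ∑ m ∈ Finset.range (2 ^ ℓ), ∑ p ∈ Finset.range (2 ^ ℓ),
            (if p &&& u = k then
              x i * x j * (((χ m + χ (cpl ℓ m)) / 2) *
                (if (i &&& m) ^^^ (j &&& cpl ℓ m) = p then (1:ℝ) else 0)) else 0) := by
        rw [Finset.sum_comm]
        refine Finset.sum_congr rfl fun i _ => ?_
        rw [Finset.sum_comm]
        refine Finset.sum_congr rfl fun j _ => ?_
        rw [Finset.sum_comm]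
    _ = ∑ i ∈ Finset.range (2 ^ ℓ), ∑ j ∈ Finset.range (2 ^ ℓ),
          ∑ m ∈ Finset.range (2 ^ ℓ),
            ((χ m + χ (cpl ℓ m)) / 2) *
              ((if i &&& (u &&& m) = k &&& m then x i else 0) *
               (if j &&& (u &&& cpl ℓ m) = k &&& cpl ℓ m then x j else 0)) := by
        refine Finset.sum_congr rfl fun i hi => Finset.sum_congr rfl fun j hj =>
          Finset.sum_congr rfl fun m hm => ?_
        rw [Finset.mem_range] at hi hj hm
        have hpt : ∀ p, (if p &&& u = k then
              x i * x j * (((χ m + χ (cpl ℓ m)) / 2) *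
                (if (i &&& m) ^^^ (j &&& cpl ℓ m) = p then (1:ℝ) else 0)) else 0)
            = (if (i &&& m) ^^^ (j &&& cpl ℓ m) = p then
                (if p &&& u = k then
                  x i * x j * ((χ m + χ (cpl ℓ m)) / 2) else 0) else 0) := by
          intro p
          rcases eq_or_ne ((i &&& m) ^^^ (j &&& cpl ℓ m)) p with rfl | hne
          · simp
          · simp [hne]
        rw [Finset.sum_congr rfl fun p _ => hpt p,
          Finset.sum_ite_eq (Finset.range (2 ^ ℓ)) _ _,
          if_pos (Finset.mem_range.2 (child_lt ℓ i j m hi hj))]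
        rw [if_congr (indic_split ℓ i j m u k hm hk hku) rfl rfl]
        by_cases h1 : i &&& (u &&& m) = k &&& m <;>
          by_cases h2 : j &&& (u &&& cpl ℓ m) = k &&& cpl ℓ m <;>
          simp [h1, h2] <;> ring
    _ = ∑ i ∈ Finset.range (2 ^ ℓ), ∑ m ∈ Finset.range (2 ^ ℓ),
          ∑ j ∈ Finset.range (2 ^ ℓ),
            ((χ m + χ (cpl ℓ m)) / 2) *
              ((if i &&& (u &&& m) = k &&& m then x i else 0) *
               (if j &&& (u &&& cpl ℓ m) = k &&& cpl ℓ m then x j else 0)) :=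
        Finset.sum_congr rfl fun i _ => Finset.sum_comm
    _ = ∑ m ∈ Finset.range (2 ^ ℓ), ∑ i ∈ Finset.range (2 ^ ℓ),
          ∑ j ∈ Finset.range (2 ^ ℓ),
            ((χ m + χ (cpl ℓ m)) / 2) *
              ((if i &&& (u &&& m) = k &&& m then x i else 0) *
               (if j &&& (u &&& cpl ℓ m) = k &&& cpl ℓ m then x j else 0)) :=
        Finset.sum_comm
    _ = ∑ m ∈ Finset.range (2 ^ ℓ),
          ((χ m + χ (cpl ℓ m)) / 2) * TProd ℓ x u k m := by
        refine Finset.sum_congr rfl fun m _ => ?_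
        rw [TProd, Asum, Asum, Finset.sum_mul_sum, Finset.mul_sum]
        refine Finset.sum_congr rfl fun i _ => ?_
        rw [Finset.mul_sum]

lemma psi_sum (ℓ : ℕ) (χ : ℕ → ℝ) (T : ℕ → ℝ)
    (hT : ∀ m ∈ Finset.range (2 ^ ℓ), T (cpl ℓ m) = T m) :
    ∑ m ∈ Finset.range (2 ^ ℓ), ((χ m + χ (cpl ℓ m)) / 2) * T m
      = ∑ m ∈ Finset.range (2 ^ ℓ), χ m * T m := by
  have h2 : ∑ m ∈ Finset.range (2 ^ ℓ), χ (cpl ℓ m) * T m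
      = ∑ m ∈ Finset.range (2 ^ ℓ), χ m * T m := by
    refine Finset.sum_nbij' (fun m => cpl ℓ m) (fun m => cpl ℓ m) ?_ ?_ ?_ ?_ ?_
    · intro a ha; exact Finset.mem_range.2 (cpl_lt ℓ a (Finset.mem_range.1 ha))
    · intro a ha; exact Finset.mem_range.2 (cpl_lt ℓ a (Finset.mem_range.1 ha))
    · intro a _; exact cpl_cpl ℓ a
    · intro a _; exact cpl_cpl ℓ a
    · intro a ha; rw [hT a ha]
  have h1 : ∑ m ∈ Finset.range (2 ^ ℓ), ((χ m + χ (cpl ℓ m)) / 2) * T m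
      = (∑ m ∈ Finset.range (2 ^ ℓ), χ m * T m
          + ∑ m ∈ Finset.range (2 ^ ℓ), χ (cpl ℓ m) * T m) / 2 := by
    rw [← Finset.sum_add_distrib, Finset.sum_div]
    exact Finset.sum_congr rfl fun m _ => by ring
  rw [h1, h2]
  ring

lemma onePoint_sum (ℓ : ℕ) (hℓ : 2 ≤ ℓ) (c : ℝ) (T : ℕ → ℝ) :
    ∑ m ∈ Finset.range (2 ^ ℓ), onePoint ℓ c m * T m
      = (1 - c) * T 0
        + ∑ i ∈ Finset.Ico 1 ℓ, (c / ((ℓ : ℝ) - 1)) * T (2 ^ i - 1) := by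
  have hpow : ∀ i, i < ℓ → (2:ℕ) ^ i - 1 < 2 ^ ℓ := by
    intro i hi
    have h1 : (2:ℕ) ^ i ≤ 2 ^ ℓ := Nat.pow_le_pow_right (by norm_num) (le_of_lt hi)
    have h2 : 0 < (2:ℕ) ^ i := Nat.pow_pos (by norm_num)
    omega
  have hD : (insert 0 ((Finset.Ico 1 ℓ).image (fun i => 2 ^ i - 1)))
      ⊆ Finset.range (2 ^ ℓ) := by
    intro m hm
    simp only [Finset.mem_insert, Finset.mem_image, Finset.mem_Ico] at hm
    rcases hm with rfl | ⟨i, ⟨_, hi⟩, rfl⟩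
    · exact Finset.mem_range.2 (Nat.pow_pos (by norm_num))
    · exact Finset.mem_range.2 (hpow i hi)
  have hnotmem : (0:ℕ) ∉ (Finset.Ico 1 ℓ).image (fun i => 2 ^ i - 1) := by
    simp only [Finset.mem_image, Finset.mem_Ico]
    rintro ⟨i, ⟨h1, _⟩, h3⟩
    have h2 : (2:ℕ) ≤ 2 ^ i := by
      calc (2:ℕ) = 2 ^ 1 := by norm_num
      _ ≤ 2 ^ i := Nat.pow_le_pow_right (by norm_num) h1
    omega
  have hinj : ∀ a ∈ Finset.Ico 1 ℓ, ∀ b ∈ Finset.Ico 1 ℓ,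
      (fun i => 2 ^ i - 1) a = (fun i => 2 ^ i - 1) b → a = b := by
    intro a _ b _ hab
    simp only at hab
    have h2a : (1:ℕ) ≤ 2 ^ a := Nat.pow_pos (by norm_num)
    have h2b : (1:ℕ) ≤ 2 ^ b := Nat.pow_pos (by norm_num)
    have : (2:ℕ) ^ a = 2 ^ b := by omega
    exact Nat.pow_right_injective (le_refl 2) this
  have hvanish : ∀ m ∈ Finset.range (2 ^ ℓ),
      m ∉ insert 0 ((Finset.Ico 1 ℓ).image (fun i => 2 ^ i - 1)) →
        onePoint ℓ c m * T m = 0 := by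
    intro m _ hnm
    simp only [Finset.mem_insert, Finset.mem_image, Finset.mem_Ico, not_or,
      not_exists] at hnm
    rw [onePoint, if_neg hnm.1, if_neg, zero_mul]
    rintro ⟨i, hi, rfl⟩
    rw [Finset.mem_Ico] at hi
    exact (hnm.2 i) ⟨hi, rfl⟩
  rw [← Finset.sum_subset hD hvanish, Finset.sum_insert hnotmem,
    Finset.sum_image hinj]
  have hT0 : onePoint ℓ c 0 * T 0 = (1 - c) * T 0 := by simp [onePoint]
  have hTi : ∑ i ∈ Finset.Ico 1 ℓ, onePoint ℓ c (2 ^ i - 1) * T (2 ^ i - 1)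
      = ∑ i ∈ Finset.Ico 1 ℓ, c / ((ℓ:ℝ) - 1) * T (2 ^ i - 1) := by
    refine Finset.sum_congr rfl fun i hi => ?_
    rw [Finset.mem_Ico] at hi
    have h2 : (2:ℕ) ≤ 2 ^ i := by
      calc (2:ℕ) = 2 ^ 1 := by norm_num
      _ ≤ 2 ^ i := Nat.pow_le_pow_right (by norm_num) hi.1
    have hne : (2:ℕ) ^ i - 1 ≠ 0 := by omega
    simp only [onePoint]
    rw [if_neg hne, if_pos ⟨i, Finset.mem_Ico.2 hi, rfl⟩]
  rw [hT0, hTi]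

lemma T_noncut (ℓ : ℕ) (x : ℕ → ℝ)
    (hx1 : ∑ i ∈ Finset.range (2 ^ ℓ), x i = 1)
    (u k : ℕ) (hu : u < 2 ^ ℓ) (hk : k < 2 ^ ℓ) (hku : k &&& u = k)
    (i : ℕ) (hnc : u % 2 ^ i = 0 ∨ u < 2 ^ i) :
    TProd ℓ x u k (2 ^ i - 1) = Asum ℓ x u k := by
  have hum : u &&& (2 ^ i - 1) = u % 2 ^ i := Nat.and_two_pow_sub_one_eq_mod u i
  have hkm : k &&& (2 ^ i - 1) = k &&& (u &&& (2 ^ i - 1)) := by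
    conv_lhs => rw [← hku]
    rw [Nat.and_assoc]
  rw [TProd]
  rcases hnc with h | h
  · have h1 : u &&& (2 ^ i - 1) = 0 := by rw [hum, h]
    have h2 : k &&& (2 ^ i - 1) = 0 := by rw [hkm, h1, Nat.and_zero]
    have h3 : u &&& cpl ℓ (2 ^ i - 1) = u := by
      rw [and_cpl_eq ℓ u _ hu, h1, Nat.zero_xor]
    have h4 : k &&& cpl ℓ (2 ^ i - 1) = k := by
      rw [and_cpl_eq ℓ k _ hk, h2, Nat.zero_xor]
    rw [h1, h2, h3, h4, Asum_zero ℓ x hx1, one_mul]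
  · have h1 : u &&& (2 ^ i - 1) = u := by rw [hum, Nat.mod_eq_of_lt h]
    have h2 : k &&& (2 ^ i - 1) = k := by rw [hkm, h1, hku]
    have h3 : u &&& cpl ℓ (2 ^ i - 1) = 0 := by
      rw [and_cpl_eq ℓ u _ hu, h1, Nat.xor_self]
    have h4 : k &&& cpl ℓ (2 ^ i - 1) = 0 := by
      rw [and_cpl_eq ℓ k _ hk, h2, Nat.xor_self]
    rw [h1, h2, h3, h4, Asum_zero ℓ x hx1, mul_one]

lemma T_zero (ℓ : ℕ) (x : ℕ → ℝ)
    (hx1 : ∑ i ∈ Finset.range (2 ^ ℓ), x i = 1)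
    (u k : ℕ) (hu : u < 2 ^ ℓ) (hk : k < 2 ^ ℓ) (hku : k &&& u = k) :
    TProd ℓ x u k 0 = Asum ℓ x u k := by
  rw [TProd, Nat.and_zero, Nat.and_zero,
    and_cpl_eq ℓ u 0 hu, and_cpl_eq ℓ k 0 hk, Nat.and_zero, Nat.and_zero,
    Nat.zero_xor, Nat.zero_xor, Asum_zero ℓ x hx1, one_mul]

lemma cut_card (ℓ u : ℕ) (hℓ : 2 ≤ ℓ) (hu : u < 2 ^ ℓ) :
    ((Finset.Ico 1 ℓ).filter
        (fun i => ¬(u % 2 ^ i = 0 ∨ u < 2 ^ i))).card = defLen ℓ u := by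
  rcases eq_or_ne u 0 with rfl | hu0
  · rw [show ((Finset.Ico 1 ℓ).filter
        (fun i => ¬((0:ℕ) % 2 ^ i = 0 ∨ (0:ℕ) < 2 ^ i))) = ∅ from ?_]
    · rw [Finset.card_empty, defLen, hiBit, loBit, if_pos rfl]
      simp [Nat.log2]
    · refine Finset.filter_false_of_mem fun i _ => ?_
      simp
  · have hfil : (Finset.Ico 1 ℓ).filter (fun i => ¬(u % 2 ^ i = 0 ∨ u < 2 ^ i))
        = Finset.Ioc (padicValNat 2 u) (Nat.log2 u) := by
      ext i
      simp only [Finset.mem_filter, Finset.mem_Ico, Finset.mem_Ioc, not_or]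
      constructor
      · rintro ⟨⟨h1, h2⟩, hmod, hlt⟩
        constructor
        · by_contra hle
          push_neg at hle
          have hdvd : 2 ^ i ∣ u := (padicValNat_dvd_iff_le hu0).2 hle
          exact hmod (Nat.dvd_iff_mod_eq_zero.1 hdvd)
        · by_contra hgt
          push_neg at hgt
          exact hlt ((Nat.log2_lt hu0).1 hgt)
      · rintro ⟨h1, h2⟩
        have hlog : Nat.log2 u < ℓ := (Nat.log2_lt hu0).2 hu
        refine ⟨⟨by omega, by omega⟩, ?_, ?_⟩
        · intro hmod
          have hdvd : 2 ^ i ∣ u := Nat.dvd_iff_mod_eq_zero.2 hmod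
          have := (padicValNat_dvd_iff_le hu0).1 hdvd
          omega
        · intro hlt
          have := (Nat.log2_lt hu0).2 hlt
          omega
    rw [hfil, Nat.card_Ioc, defLen, hiBit, loBit, if_neg hu0]

/-- **Holland's approximate schema theorem for one-point crossover.**  For `ℓ ≥ 2`,
`x ∈ Λ`, `c ∈ [0,1]`, and `y = C(x)` with one-point crossover at rate `c`:
`y_k^{(u)} ≥ x_k^{(u)} (1 - c L(u)/(ℓ-1))`. -/
theorem holland_approximate_schema_theorem_one_point_crossover
    (ℓ : ℕ) (hℓ : 2 ≤ ℓ) (x : ℕ → ℝ)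
    (hx0 : ∀ i ∈ Finset.range (2 ^ ℓ), 0 ≤ x i)
    (hx1 : ∑ i ∈ Finset.range (2 ^ ℓ), x i = 1)
    (c : ℝ) (hc : c ∈ Set.Icc (0 : ℝ) 1)
    (u : ℕ) (hu : u < 2 ^ ℓ) (k : ℕ) (hk : k ∈ omg ℓ u) :
    schAvg ℓ (crossH ℓ (onePoint ℓ c) x) u k ≥
      schAvg ℓ x u k * (1 - c * (defLen ℓ u : ℝ) / ((ℓ : ℝ) - 1)) := by
  obtain ⟨hc0, hc1⟩ := hc
  rw [omg, Finset.mem_filter, Finset.mem_range] at hk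
  obtain ⟨hkr, hku⟩ := hk
  have hs : schAvg ℓ x u k = Asum ℓ x u k := schAvg_eq_Asum ℓ x u k hu hkr hku
  have hs0 : 0 ≤ Asum ℓ x u k := Asum_nonneg ℓ x hx0 u k
  have hl2 : (2:ℝ) ≤ (ℓ:ℝ) := by exact_mod_cast hℓ
  have hlpos : (0:ℝ) < (ℓ:ℝ) - 1 := by linarith
  have hlne : ((ℓ:ℝ) - 1) ≠ 0 := ne_of_gt hlpos
  have hsym : ∀ m ∈ Finset.range (2 ^ ℓ),
      TProd ℓ x u k (cpl ℓ m) = TProd ℓ x u k m :=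
    fun m _ => by rw [TProd, TProd, cpl_cpl]; ring
  have hkey : schAvg ℓ (crossH ℓ (onePoint ℓ c) x) u k
      = (1 - c) * Asum ℓ x u k
        + ∑ i ∈ Finset.Ico 1 ℓ,
            (c / ((ℓ:ℝ) - 1)) * TProd ℓ x u k (2 ^ i - 1) := by
    rw [schAvg_crossH ℓ (onePoint ℓ c) x u k hu hkr hku,
      psi_sum ℓ (onePoint ℓ c) (TProd ℓ x u k) hsym,
      onePoint_sum ℓ hℓ c (TProd ℓ x u k),
      T_zero ℓ x hx1 u k hu hkr hku]
  have hbound : ∑ i ∈ Finset.Ico 1 ℓ,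
        (if (u % 2 ^ i = 0 ∨ u < 2 ^ i) then
          (c / ((ℓ:ℝ) - 1)) * Asum ℓ x u k else 0)
      ≤ ∑ i ∈ Finset.Ico 1 ℓ, (c / ((ℓ:ℝ) - 1)) * TProd ℓ x u k (2 ^ i - 1) := by
    refine Finset.sum_le_sum fun i _ => ?_
    by_cases h : (u % 2 ^ i = 0 ∨ u < 2 ^ i)
    · rw [if_pos h, T_noncut ℓ x hx1 u k hu hkr hku i h]
    · rw [if_neg h]
      have hT0 : 0 ≤ TProd ℓ x u k (2 ^ i - 1) :=
        mul_nonneg (Asum_nonneg ℓ x hx0 _ _) (Asum_nonneg ℓ x hx0 _ _)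
      exact mul_nonneg (div_nonneg hc0 (le_of_lt hlpos)) hT0
  have h1 := Finset.card_filter_add_card_filter_not
    (s := Finset.Ico 1 ℓ) (fun i => (u % 2 ^ i = 0 ∨ u < 2 ^ i))
  rw [cut_card ℓ u hℓ hu, Nat.card_Ico] at h1
  have hLle : defLen ℓ u ≤ ℓ - 1 := by omega
  have hcount : ((Finset.Ico 1 ℓ).filter
      (fun i => (u % 2 ^ i = 0 ∨ u < 2 ^ i))).card = (ℓ - 1) - defLen ℓ u := by
    omega
  have hsum2 : ∑ i ∈ Finset.Ico 1 ℓ,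
        (if (u % 2 ^ i = 0 ∨ u < 2 ^ i) then
          (c / ((ℓ:ℝ) - 1)) * Asum ℓ x u k else 0)
      = ((((ℓ - 1) - defLen ℓ u : ℕ)) : ℝ)
          * ((c / ((ℓ:ℝ) - 1)) * Asum ℓ x u k) := by
    rw [← Finset.sum_filter, Finset.sum_const, hcount, nsmul_eq_mul]
  have hcast : ((((ℓ - 1) - defLen ℓ u : ℕ)) : ℝ)
      = (ℓ:ℝ) - 1 - (defLen ℓ u : ℝ) := by
    have h2 : (1:ℕ) ≤ ℓ := by omega
    rw [Nat.cast_sub hLle, Nat.cast_sub h2, Nat.cast_one]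
  rw [hkey, hs, ge_iff_le]
  have hfinal : Asum ℓ x u k * (1 - c * (defLen ℓ u : ℝ) / ((ℓ : ℝ) - 1))
      = (1 - c) * Asum ℓ x u k
        + (((ℓ:ℝ) - 1 - (defLen ℓ u : ℝ)))
            * ((c / ((ℓ:ℝ) - 1)) * Asum ℓ x u k) := by
    field_simp
    ring
  rw [hfinal]
  have := hbound
  rw [hsum2, hcast] at this
  linarith
end
end

section
/- Let x ∈ Λ, let U be the mutation heuristic for a mutation-mask distribution μ, let y = U(x), and let u ∈ Ω. Then ŷ^{(u)} = Û^{(u)} x̂^{(u)}, where Û^{(u)} = W^{(u)} U^{(u)} W^{(u)}, x̂^{(u)} is the vector with entries x̂_k^{(u)} = 2^{#ū/2}(Wx)_k for k ∈ Ω_u, and similarly for ŷ^{(u)}. -/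
open Finset

noncomputable section

lemma pc_rec (n : ℕ) : pc n = n % 2 + pc (n / 2) := by
  rcases Nat.eq_zero_or_pos n with h | h
  · simp [h, pc]
  · unfold pc
    rw [Nat.digits_def' (by norm_num) h]
    simp

lemma pc_zero : pc 0 = 0 := by simp [pc]

lemma neg_one_pow_mod_two (n : ℕ) : (-1:ℝ)^(n % 2) = (-1)^n := by
  conv_rhs => rw [← Nat.div_add_mod n 2]
  rw [pow_add, pow_mul]
  simp

lemma sgn_xor (a b : ℕ) : (-1:ℝ)^pc (a ^^^ b) = (-1)^pc a * (-1)^pc b := by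
  induction a using Nat.strong_induction_on generalizing b with
  | _ a ih =>
    rcases Nat.eq_zero_or_pos a with h | h
    · simp [h, pc_zero]
    · rw [pc_rec (a ^^^ b), pc_rec a, pc_rec b, Nat.xor_div_two,
        pow_add, pow_add, pow_add, ih (a/2) (Nat.div_lt_self h one_lt_two) (b/2),
        (Nat.xor_mod_two_eq : (a ^^^ b) % 2 = (a + b) % 2), neg_one_pow_mod_two,
        pow_add, ← neg_one_pow_mod_two a, ← neg_one_pow_mod_two b]
      ring

lemma pc_two_pow (b : ℕ) : pc (2 ^ b) = 1 := by
  induction b with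
  | zero => simp [pc]
  | succ b ih =>
    rw [pc_rec]
    simp [Nat.pow_succ, Nat.mul_mod_left, ih, Nat.two_pow_pos]

lemma pc_two_pow_sub_one (n : ℕ) : pc (2 ^ n - 1) = n := by
  induction n with
  | zero => simp [pc]
  | succ n ih =>
    rw [pc_rec]
    have h1 : (2 ^ (n+1) - 1) % 2 = 1 := by
      have := Nat.one_le_two_pow (n := n+1); omega
    have h2 : (2 ^ (n+1) - 1) / 2 = 2 ^ n - 1 := by
      have := Nat.one_le_two_pow (n := n); rw [pow_succ]; omega
    rw [h1, h2, ih]; omega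

lemma mem_omg {ℓ u v : ℕ} : v ∈ omg ℓ u ↔ v < 2 ^ ℓ ∧ v &&& u = v := by
  simp [omg]

lemma and_decomp (a b : ℕ) : a &&& b = 2 * (a / 2 &&& b / 2) + (a % 2 &&& b % 2) := by
  have h2 : (a &&& b) % 2 = a % 2 &&& b % 2 := by
    rcases Nat.mod_two_eq_zero_or_one a with h | h <;>
      rcases Nat.mod_two_eq_zero_or_one b with h' | h' <;>
      simp [h, h'] <;>
      · rcases Nat.mod_two_eq_zero_or_one (a &&& b) with h'' | h'' <;> simp [h''] <;>
        · exfalso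
          have := Nat.and_mod_two_eq_one (a := a) (b := b)
          omega
  have := Nat.and_div_two (a := a) (b := b)
  omega

lemma card_omg (ℓ : ℕ) : ∀ u, u < 2 ^ ℓ → (omg ℓ u).card = 2 ^ pc u := by
  induction ℓ with
  | zero =>
    intro u hu
    interval_cases u
    have : omg 0 0 = {0} := by decide
    simp [this, pc_zero]
  | succ ℓ ih =>
    intro u hu
    have key : (omg (ℓ+1) u).card = ((Finset.range (u % 2 + 1)) ×ˢ omg ℓ (u / 2)).card := by
      apply Finset.card_nbij' (i := fun v => (v % 2, v / 2)) (j := fun p => 2 * p.2 + p.1)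
      · intro v hv
        rw [Finset.mem_coe, mem_omg] at hv
        obtain ⟨hlt, hand⟩ := hv
        have hd : v / 2 &&& u / 2 = v / 2 := by
          rw [← Nat.and_div_two, hand]
        have hm : v % 2 &&& u % 2 = v % 2 := by
          have h1 := and_decomp v u
          rw [hand] at h1
          have := Nat.and_div_two (a := v) (b := u)
          omega
        simp only [Finset.mem_coe, Finset.mem_product, Finset.mem_range, mem_omg]
        refine ⟨?_, ?_, hd⟩
        · rcases Nat.mod_two_eq_zero_or_one v with h | h <;>
            rcases Nat.mod_two_eq_zero_or_one u with h' | h' <;>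
            simp [h, h'] at hm ⊢ <;> omega
        · rw [pow_succ] at hlt; omega
      · intro p hp
        simp only [Finset.mem_coe, Finset.mem_product, Finset.mem_range, mem_omg] at hp
        obtain ⟨hb, hw, hand⟩ := hp
        rw [Finset.mem_coe, mem_omg]; dsimp only
        constructor
        · rw [pow_succ]; omega
        · rw [and_decomp]
          have e1 : (2 * p.2 + p.1) / 2 = p.2 := by omega
          have e2 : (2 * p.2 + p.1) % 2 = p.1 := by omega
          rw [e1, e2, hand]
          have hb1 : p.1 &&& u % 2 = p.1 := by
            rcases Nat.mod_two_eq_zero_or_one u with h | h <;> rw [h]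
            · have : p.1 = 0 := by omega
              simp [this]
            · have : p.1 = 0 ∨ p.1 = 1 := by omega
              rcases this with h' | h' <;> simp [h']
          omega
      · intro v hv; simp; omega
      · intro p hp
        simp only [Finset.mem_coe, Finset.mem_product, Finset.mem_range] at hp
        have e1 : (2 * p.2 + p.1) / 2 = p.2 := by omega
        have e2 : (2 * p.2 + p.1) % 2 = p.1 := by omega
        simp [e1, e2]
    rw [key, Finset.card_product, Finset.card_range,
      ih (u / 2) (by rw [pow_succ] at hu; omega), pc_rec u]
    rcases Nat.mod_two_eq_zero_or_one u with h | h <;> rw [h] <;> ring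

lemma two_pow_and_of_testBit {b t : ℕ} (h : t.testBit b = true) : 2 ^ b &&& t = 2 ^ b := by
  apply Nat.eq_of_testBit_eq
  intro i
  rw [Nat.testBit_and, Nat.testBit_two_pow]
  by_cases hib : b = i
  · subst hib; simp [h]
  · simp [hib]

lemma sum_omg (ℓ u t : ℕ) (hu : u < 2 ^ ℓ) (ht : t &&& u = t) :
    ∑ v ∈ omg ℓ u, (-1:ℝ) ^ pc (v &&& t) = if t = 0 then (2:ℝ) ^ pc u else 0 := by
  by_cases h0 : t = 0
  · subst h0
    simp only [Nat.and_zero, pc_zero, pow_zero, Finset.sum_const, nsmul_eq_mul, mul_one,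
      card_omg ℓ u hu, if_true]
    push_cast
    ring
  · rw [if_neg h0]
    obtain ⟨b, hb⟩ := Nat.exists_testBit_of_ne_zero h0
    have hub : u.testBit b = true := by
      have := congrArg (fun z => z.testBit b) ht
      simp only [Nat.testBit_and] at this
      cases hu2 : u.testBit b
      · rw [hb, hu2] at this; simp at this
      · rfl
    have hblt : 2 ^ b < 2 ^ ℓ := lt_of_le_of_lt (Nat.ge_two_pow_of_testBit hub) hu
    apply Finset.sum_involution (g := fun v _ => v ^^^ 2 ^ b)
    · intro v hv
      have key : (v ^^^ 2 ^ b) &&& t = (v &&& t) ^^^ 2 ^ b := by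
        rw [Nat.and_xor_distrib_right, two_pow_and_of_testBit hb]
      rw [key, sgn_xor, pc_two_pow]
      ring
    · intro v hv _
      intro hcontra
      have := congrArg (fun z => z.testBit b) hcontra
      simp [Nat.testBit_xor, Nat.testBit_two_pow] at this
    · intro v hv
      simp [Nat.xor_assoc]
    · intro v hv
      rw [mem_omg] at hv ⊢
      refine ⟨Nat.xor_lt_two_pow hv.1 hblt, ?_⟩
      rw [Nat.and_xor_distrib_right, hv.2, two_pow_and_of_testBit hub]

lemma pc_xor_disjoint (a : ℕ) : ∀ b, a &&& b = 0 → pc (a ^^^ b) = pc a + pc b := by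
  induction a using Nat.strong_induction_on with
  | _ a ih =>
    intro b hab
    rcases Nat.eq_zero_or_pos a with h | h
    · simp [h, pc_zero]
    · have hd : a / 2 &&& b / 2 = 0 := by rw [← Nat.and_div_two, hab]
      have hm : ¬ (a % 2 = 1 ∧ b % 2 = 1) := by
        intro hc
        have := (Nat.and_mod_two_eq_one (a := a) (b := b)).2 hc
        rw [hab] at this; simp at this
      rw [pc_rec (a ^^^ b), pc_rec a, pc_rec b, Nat.xor_div_two,
        ih (a/2) (Nat.div_lt_self h one_lt_two) (b/2) hd,
        (Nat.xor_mod_two_eq : (a ^^^ b) % 2 = (a + b) % 2)]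
      have h1 := Nat.mod_two_eq_zero_or_one a
      have h2 := Nat.mod_two_eq_zero_or_one b
      omega

lemma sum_xor_range (n i : ℕ) (hi : i < 2 ^ n) (f : ℕ → ℝ) :
    ∑ j ∈ Finset.range (2 ^ n), f (i ^^^ j) = ∑ j ∈ Finset.range (2 ^ n), f j := by
  apply Finset.sum_nbij' (i := fun j => i ^^^ j) (j := fun j => i ^^^ j)
  · intro a ha
    simp only [Finset.mem_range] at ha ⊢
    exact Nat.xor_lt_two_pow hi ha
  · intro a ha
    simp only [Finset.mem_range] at ha ⊢
    exact Nat.xor_lt_two_pow hi ha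
  · intro a _; simp [← Nat.xor_assoc]
  · intro a _; simp [← Nat.xor_assoc]
  · intro a _; rfl

lemma sum_xor_omg (ℓ u i : ℕ) (hi : i ∈ omg ℓ u) (f : ℕ → ℝ) :
    ∑ w ∈ omg ℓ u, f (i ^^^ w) = ∑ w ∈ omg ℓ u, f w := by
  rw [mem_omg] at hi
  have key : ∀ a, a ∈ omg ℓ u → i ^^^ a ∈ omg ℓ u := by
    intro a ha
    rw [mem_omg] at ha ⊢
    exact ⟨Nat.xor_lt_two_pow hi.1 ha.1,
      by rw [Nat.and_xor_distrib_right, hi.2, ha.2]⟩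
  apply Finset.sum_nbij' (i := fun j => i ^^^ j) (j := fun j => i ^^^ j) key key
  · intro a _; simp [← Nat.xor_assoc]
  · intro a _; simp [← Nat.xor_assoc]
  · intro a _; rfl

lemma sum_split (ℓ u : ℕ) (hu : u < 2 ^ ℓ) (f : ℕ → ℝ) :
    ∑ m ∈ Finset.range (2 ^ ℓ), f m
      = ∑ a ∈ omg ℓ u, ∑ b ∈ omg ℓ (cpl ℓ u), f (a ^^^ b) := by
  have hucpl : u &&& cpl ℓ u = 0 := by
    unfold cpl
    rw [Nat.and_xor_distrib_left, Nat.and_self,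
      Nat.and_two_pow_sub_one_of_lt_two_pow hu, Nat.xor_self]
  have hrec : ∀ m, m < 2 ^ ℓ → m &&& u ^^^ m &&& cpl ℓ u = m := by
    intro m hm
    rw [← Nat.and_xor_distrib_left]
    unfold cpl
    rw [← Nat.xor_assoc, Nat.xor_self, Nat.zero_xor,
      Nat.and_two_pow_sub_one_of_lt_two_pow hm]
  rw [← Finset.sum_product']
  apply Finset.sum_nbij' (i := fun m => (m &&& u, m &&& cpl ℓ u)) (j := fun p => p.1 ^^^ p.2)
  · intro m hm
    simp only [Finset.mem_range] at hm
    simp only [Finset.mem_product, mem_omg]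
    refine ⟨⟨lt_of_le_of_lt (Nat.and_le_left) hm, ?_⟩, lt_of_le_of_lt (Nat.and_le_left) hm, ?_⟩
    · rw [Nat.and_assoc, Nat.and_self]
    · rw [Nat.and_assoc, Nat.and_self]
  · intro p hp
    simp only [Finset.mem_product, mem_omg] at hp
    simp only [Finset.mem_range]
    exact Nat.xor_lt_two_pow hp.1.1 hp.2.1
  · intro m hm
    simp only [Finset.mem_range] at hm
    exact hrec m hm
  · intro p hp
    simp only [Finset.mem_product, mem_omg] at hp
    obtain ⟨⟨_, ha⟩, _, hb⟩ := hp
    have hbu : p.2 &&& u = 0 := by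
      rw [← hb, Nat.and_assoc, Nat.and_comm (cpl ℓ u) u, hucpl, Nat.and_zero]
    have hac : p.1 &&& cpl ℓ u = 0 := by
      rw [← ha, Nat.and_assoc, hucpl, Nat.and_zero]
    have e1 : (p.1 ^^^ p.2) &&& u = p.1 := by
      rw [Nat.and_xor_distrib_right, ha, hbu, Nat.xor_zero]
    have e2 : (p.1 ^^^ p.2) &&& cpl ℓ u = p.2 := by
      rw [Nat.and_xor_distrib_right, hac, hb, Nat.zero_xor]
    simp [e1, e2]
  · intro m hm
    simp only [Finset.mem_range] at hm
    rw [show (m &&& u, m &&& cpl ℓ u).1 ^^^ (m &&& u, m &&& cpl ℓ u).2 = m from hrec m hm]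


/-- For `x ∈ Λ`, a mutation-mask distribution `μ`, `y = U(x)` and `u ∈ Ω`:
`ŷ^{(u)} = Û^{(u)} x̂^{(u)}`, where `Û^{(u)} = W^{(u)} U^{(u)} W^{(u)}`,
`x̂_k^{(u)} = 2^{#ū/2} (Wx)_k`, and `U^{(u)}_{v,w} = μ^{(u)}_{v⊕w}`. -/
theorem mutation_schema_walsh_equation
    (ℓ : ℕ) (hℓ : 1 ≤ ℓ) (x μ : ℕ → ℝ)
    (hx0 : ∀ i ∈ Finset.range (2 ^ ℓ), 0 ≤ x i)
    (hx1 : ∑ i ∈ Finset.range (2 ^ ℓ), x i = 1)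
    (hμ0 : ∀ m ∈ Finset.range (2 ^ ℓ), 0 ≤ μ m)
    (hμ1 : ∑ m ∈ Finset.range (2 ^ ℓ), μ m = 1)
    (u : ℕ) (hu : u < 2 ^ ℓ) (k : ℕ) (hk : k ∈ omg ℓ u) :
    Real.sqrt 2 ^ pc (cpl ℓ u) * walsh ℓ (mutH ℓ μ x) k =
      ∑ j ∈ omg ℓ u,
        (∑ v ∈ omg ℓ u, ∑ w ∈ omg ℓ u,
            ((Real.sqrt 2 ^ pc u)⁻¹ * (-1 : ℝ) ^ pc (k &&& v)) * schAvg ℓ μ u (v ^^^ w) *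
              ((Real.sqrt 2 ^ pc u)⁻¹ * (-1 : ℝ) ^ pc (w &&& j))) *
          (Real.sqrt 2 ^ pc (cpl ℓ u) * walsh ℓ x j) := by
  have hk1 : k < 2 ^ ℓ := (mem_omg.mp hk).1
  have hk2 : k &&& u = k := (mem_omg.mp hk).2
  have hucpl : u &&& cpl ℓ u = 0 := by
    unfold cpl
    rw [Nat.and_xor_distrib_left, Nat.and_self,
      Nat.and_two_pow_sub_one_of_lt_two_pow hu, Nat.xor_self]
  have hsne : Real.sqrt 2 ≠ 0 := by positivity
  have hsp : Real.sqrt 2 ^ pc u * Real.sqrt 2 ^ pc u = 2 ^ pc u := by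
    rw [← mul_pow, Real.mul_self_sqrt (by norm_num)]
  set M : ℝ := ∑ m ∈ Finset.range (2 ^ ℓ), (-1:ℝ) ^ pc (k &&& m) * μ m with hM
  set X : ℝ := ∑ i ∈ Finset.range (2 ^ ℓ), (-1:ℝ) ^ pc (k &&& i) * x i with hX
  -- k &&& b = 0 for b in Ω_ū
  have hkb : ∀ b ∈ omg ℓ (cpl ℓ u), k &&& b = 0 := by
    intro b hb
    rw [← (mem_omg.mp hb).2, Nat.and_comm b (cpl ℓ u), ← Nat.and_assoc, ← hk2,
      Nat.and_assoc k u (cpl ℓ u), hucpl, Nat.and_zero, Nat.zero_and]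
  -- Step 1 : LHS sum = X * M
  have hS : ∑ j ∈ Finset.range (2 ^ ℓ), (-1:ℝ) ^ pc (k &&& j) * mutH ℓ μ x j = X * M := by
    unfold mutH
    simp_rw [Finset.mul_sum]
    rw [Finset.sum_comm]
    have step : ∀ i ∈ Finset.range (2 ^ ℓ),
        ∑ j ∈ Finset.range (2 ^ ℓ), (-1:ℝ) ^ pc (k &&& j) * (μ (i ^^^ j) * x i)
          = ((-1:ℝ) ^ pc (k &&& i) * x i) * M := by
      intro i hi
      rw [← sum_xor_range ℓ i (Finset.mem_range.mp hi)
        (fun j => (-1:ℝ) ^ pc (k &&& j) * (μ (i ^^^ j) * x i))]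
      rw [hM, Finset.mul_sum]
      apply Finset.sum_congr rfl
      intro j hj
      have e1 : i ^^^ (i ^^^ j) = j := by
        rw [← Nat.xor_assoc, Nat.xor_self, Nat.zero_xor]
      rw [e1, Nat.and_xor_distrib_left, sgn_xor]
      ring
    rw [Finset.sum_congr rfl step, ← Finset.sum_mul, ← hX]
  -- Step 2 : inner bracket is diagonal
  have hB : ∀ j ∈ omg ℓ u,
      (∑ v ∈ omg ℓ u, ∑ w ∈ omg ℓ u,
          ((Real.sqrt 2 ^ pc u)⁻¹ * (-1 : ℝ) ^ pc (k &&& v)) * schAvg ℓ μ u (v ^^^ w) *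
            ((Real.sqrt 2 ^ pc u)⁻¹ * (-1 : ℝ) ^ pc (w &&& j)))
        = if k = j then ∑ m ∈ omg ℓ u, (-1:ℝ) ^ pc (m &&& j) * schAvg ℓ μ u m else 0 := by
    intro j hj
    have hj2 : j &&& u = j := (mem_omg.mp hj).2
    have step : ∀ v ∈ omg ℓ u,
        ∑ w ∈ omg ℓ u,
          ((Real.sqrt 2 ^ pc u)⁻¹ * (-1 : ℝ) ^ pc (k &&& v)) * schAvg ℓ μ u (v ^^^ w) *
            ((Real.sqrt 2 ^ pc u)⁻¹ * (-1 : ℝ) ^ pc (w &&& j))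
        = (-1:ℝ) ^ pc (v &&& (k ^^^ j)) *
            ((Real.sqrt 2 ^ pc u)⁻¹ * (Real.sqrt 2 ^ pc u)⁻¹ *
              ∑ m ∈ omg ℓ u, (-1:ℝ) ^ pc (m &&& j) * schAvg ℓ μ u m) := by
      intro v hv
      rw [← sum_xor_omg ℓ u v hv
        (fun w => ((Real.sqrt 2 ^ pc u)⁻¹ * (-1 : ℝ) ^ pc (k &&& v)) * schAvg ℓ μ u (v ^^^ w) *
            ((Real.sqrt 2 ^ pc u)⁻¹ * (-1 : ℝ) ^ pc (w &&& j)))]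
      rw [Finset.mul_sum, Finset.mul_sum]
      apply Finset.sum_congr rfl
      intro w hw
      have e1 : v ^^^ (v ^^^ w) = w := by
        rw [← Nat.xor_assoc, Nat.xor_self, Nat.zero_xor]
      rw [e1]
      simp only [Nat.and_xor_distrib_right, Nat.and_xor_distrib_left, sgn_xor]
      rw [Nat.and_comm k v]
      ring
    rw [Finset.sum_congr rfl step, ← Finset.sum_mul,
      sum_omg ℓ u (k ^^^ j) hu (by rw [Nat.and_xor_distrib_right, hk2, hj2])]
    by_cases hkj : k = j
    · rw [if_pos (by rw [hkj, Nat.xor_self]), if_pos hkj, ← hsp]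
      field_simp
    · rw [if_neg (fun h => hkj (xor_eq_zero_iff.mp h)), if_neg hkj, zero_mul]
  -- Step 3 : the diagonal entry equals M
  have hC : ∑ m ∈ omg ℓ u, (-1:ℝ) ^ pc (m &&& k) * schAvg ℓ μ u m = M := by
    rw [hM, sum_split ℓ u hu (fun m => (-1:ℝ) ^ pc (k &&& m) * μ m)]
    apply Finset.sum_congr rfl
    intro a ha
    unfold schAvg
    rw [Finset.mul_sum]
    apply Finset.sum_congr rfl
    intro b hb
    rw [Nat.and_xor_distrib_left, hkb b hb, Nat.xor_zero, Nat.xor_comm a b,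
      Nat.and_comm a k]
  -- Step 4 : assemble
  have step4 : ∀ j ∈ omg ℓ u,
      (∑ v ∈ omg ℓ u, ∑ w ∈ omg ℓ u,
          ((Real.sqrt 2 ^ pc u)⁻¹ * (-1 : ℝ) ^ pc (k &&& v)) * schAvg ℓ μ u (v ^^^ w) *
            ((Real.sqrt 2 ^ pc u)⁻¹ * (-1 : ℝ) ^ pc (w &&& j))) *
        (Real.sqrt 2 ^ pc (cpl ℓ u) * walsh ℓ x j)
      = if k = j then
          (∑ m ∈ omg ℓ u, (-1:ℝ) ^ pc (m &&& j) * schAvg ℓ μ u m) *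
            (Real.sqrt 2 ^ pc (cpl ℓ u) * walsh ℓ x j)
        else 0 := by
    intro j hj
    rw [hB j hj]
    by_cases hkj : k = j
    · rw [if_pos hkj, if_pos hkj]
    · rw [if_neg hkj, if_neg hkj, zero_mul]
  rw [Finset.sum_congr rfl step4, Finset.sum_ite_eq (omg ℓ u) k, if_pos hk, hC]
  show Real.sqrt 2 ^ pc (cpl ℓ u) * walsh ℓ (mutH ℓ μ x) k
    = M * (Real.sqrt 2 ^ pc (cpl ℓ u) * walsh ℓ x k)
  unfold walsh
  rw [hS, ← hX]
  ring
end
end
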